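/- Under the setting and positivity assumptions of the robust multiview covariate shift classifier (views V_g, V_o, projections π_v, features φ_v, ratios ρ_v(x) = p_train(π_v x)/p_test(π_v x), ρ(x) = p_train(x)/p_test(x), r_v(x) = ρ_v(x)/ρ(x), and softmax model P̂_θ(y|x) ∝ exp(∑_{v∈V_g} ρ_v(x) θ_v·φ_v(π_v x, y) + ρ(x) ∑_{v'∈V_o} θ_{v'}·φ_{v'}(π_{v'} x, y))), the function L(θ) = ∑_{x,y} p_test(x) p(y|x) log P̂_θ(y|x) is differentiable in θ and its gradient with respect to the block θ_v, for v ∈ V_g, equals ∑_{x,y} p_train(x) p(y|x) r_v(x) φ_v(π_v x, y) − ∑_x p_train(x) r_v(x) ∑_y P̂_θ(y|x) φ_v(π_v x, y), while its gradient with respect to θ_{v'}, for v' ∈ V_o, equals ∑_{x,y} p_train(x) p(y|x) φ_{v'}(π_{v'} x, y) − ∑_x p_train(x) ∑_y P̂_θ(y|x) φ_{v'}(π_{v'} x, y). In particular, the gradient depends only on training-distribution expectations (of reweighted features for generalized views and unweighted features for non-generalized views). -/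

import Mathlib

open Finset

/-- the testing conditional log-likelihood
`L(θ) = ∑_{x,y} p_test(x) p(y|x) log P̂_θ(y|x)` of the robust multiview
covariate shift classifier is differentiable in `θ = (θg, θo)`, and its
partial derivatives (gradient blocks) are given by training-distribution
expectations: reweighted-feature moment differences for generalized views and
plain moment differences for non-generalized views. -/
theorem robust_multiview_loglik_gradient
    {X Y Vg Vo : Type*} [Fintype X] [Fintype Y] [Fintype Vg] [Fintype Vo]
    [DecidableEq Vg] [DecidableEq Vo] [Nonempty X] [Nonempty Y]
    (ptrain ptest : X → ℝ)
    (htrain_pos : ∀ x, 0 < ptrain x) (htrain_sum : ∑ x, ptrain x = 1)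
    (htest_pos : ∀ x, 0 < ptest x) (htest_sum : ∑ x, ptest x = 1)
    (pcond : X → Y → ℝ)
    (hcond_nonneg : ∀ x y, 0 ≤ pcond x y) (hcond_sum : ∀ x, ∑ y, pcond x y = 1)
    -- generalized views
    (Xg : Vg → Type*) [∀ v, Fintype (Xg v)] [∀ v, DecidableEq (Xg v)]
    (πg : (v : Vg) → X → Xg v)
    (dg : Vg → ℕ)
    (φg : (v : Vg) → Xg v → Y → Fin (dg v) → ℝ)
    -- non-generalized views
    (Xo : Vo → Type*) [∀ v, Fintype (Xo v)] [∀ v, DecidableEq (Xo v)]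
    (πo : (v : Vo) → X → Xo v)
    (do_ : Vo → ℕ)
    (φo : (v : Vo) → Xo v → Y → Fin (do_ v) → ℝ)
    -- view marginals and density ratios ρ_v, ρ, r_v
    (mtrain mtest : (v : Vg) → X → ℝ)
    (hmtrain : ∀ v x, mtrain v x =
      ∑ x' ∈ Finset.univ.filter (fun x' => πg v x' = πg v x), ptrain x')
    (hmtest : ∀ v x, mtest v x =
      ∑ x' ∈ Finset.univ.filter (fun x' => πg v x' = πg v x), ptest x')
    (hmtrain_pos : ∀ v x, 0 < mtrain v x) (hmtest_pos : ∀ v x, 0 < mtest v x)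
    (ρv : Vg → X → ℝ) (hρv : ∀ v x, ρv v x = mtrain v x / mtest v x)
    (ρ : X → ℝ) (hρ : ∀ x, ρ x = ptrain x / ptest x)
    (r : Vg → X → ℝ) (hr : ∀ v x, r v x = ρv v x / ρ x)
    -- softmax model
    (Phat : (((v : Vg) → Fin (dg v) → ℝ) × ((v : Vo) → Fin (do_ v) → ℝ)) →
      X → Y → ℝ)
    (hPhat : ∀ θ x y, Phat θ x y =
      Real.exp ((∑ v, ρv v x * ∑ i, θ.1 v i * φg v (πg v x) y i) +
          ρ x * ∑ v', ∑ i, θ.2 v' i * φo v' (πo v' x) y i) /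
        ∑ y', Real.exp ((∑ v, ρv v x * ∑ i, θ.1 v i * φg v (πg v x) y' i) +
          ρ x * ∑ v', ∑ i, θ.2 v' i * φo v' (πo v' x) y' i))
    -- testing conditional log-likelihood
    (L : (((v : Vg) → Fin (dg v) → ℝ) × ((v : Vo) → Fin (do_ v) → ℝ)) → ℝ)
    (hL : ∀ θ, L θ = ∑ x, ∑ y, ptest x * pcond x y * Real.log (Phat θ x y)) :
    Differentiable ℝ L ∧
      (∀ θ (v : Vg) (i : Fin (dg v)),
        fderiv ℝ L θ (Pi.single v (Pi.single i (1 : ℝ)), 0) =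
          (∑ x, ∑ y, ptrain x * pcond x y * r v x * φg v (πg v x) y i) -
            ∑ x, ptrain x * r v x * ∑ y, Phat θ x y * φg v (πg v x) y i) ∧
      (∀ θ (v' : Vo) (i : Fin (do_ v')),
        fderiv ℝ L θ (0, Pi.single v' (Pi.single i (1 : ℝ))) =
          (∑ x, ∑ y, ptrain x * pcond x y * φo v' (πo v' x) y i) -
            ∑ x, ptrain x * ∑ y, Phat θ x y * φo v' (πo v' x) y i) := by

  classical
  -- The score function, as a linear map in `θ`, for each `(x, y)`.
  have hlinS : ∀ (x : X) (y : Y), IsLinearMap ℝ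
      (fun θ : (((v : Vg) → Fin (dg v) → ℝ) × ((v : Vo) → Fin (do_ v) → ℝ)) =>
        (∑ v, ρv v x * ∑ i, θ.1 v i * φg v (πg v x) y i) +
          ρ x * ∑ v', ∑ i, θ.2 v' i * φo v' (πo v' x) y i) := by
    intro x y
    constructor
    · intro a b
      simp only [Prod.fst_add, Prod.snd_add, Pi.add_apply, add_mul,
        Finset.sum_add_distrib, mul_add]
      ring
    · intro c a
      simp only [Prod.smul_fst, Prod.smul_snd, Pi.smul_apply, smul_eq_mul]
      have h1 : ∀ v : Vg, ∑ i, c * a.1 v i * φg v (πg v x) y i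
          = c * ∑ i, a.1 v i * φg v (πg v x) y i := by
        intro v; rw [Finset.mul_sum]
        exact Finset.sum_congr rfl fun j _ => by ring
      have h2 : ∀ v' : Vo, ∑ i, c * a.2 v' i * φo v' (πo v' x) y i
          = c * ∑ i, a.2 v' i * φo v' (πo v' x) y i := by
        intro v'; rw [Finset.mul_sum]
        exact Finset.sum_congr rfl fun j _ => by ring
      simp only [h1, h2, mul_left_comm]
      rw [← Finset.mul_sum, ← Finset.mul_sum]
      ring
  set S : X → Y →
      ((((v : Vg) → Fin (dg v) → ℝ) × ((v : Vo) → Fin (do_ v) → ℝ)) →L[ℝ] ℝ) :=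
    fun x y => (IsLinearMap.mk' _ (hlinS x y)).toContinuousLinearMap with hS
  have hSapp : ∀ x y θ, S x y θ =
      (∑ v, ρv v x * ∑ i, θ.1 v i * φg v (πg v x) y i) +
        ρ x * ∑ v', ∑ i, θ.2 v' i * φo v' (πo v' x) y i := fun _ _ _ => rfl
  set Z : X → ((((v : Vg) → Fin (dg v) → ℝ) × ((v : Vo) → Fin (do_ v) → ℝ))) → ℝ :=
    fun x θ => ∑ y', Real.exp (S x y' θ) with hZ
  have hZpos : ∀ x θ, 0 < Z x θ := fun x θ =>
    Finset.sum_pos (fun y' _ => Real.exp_pos _) Finset.univ_nonempty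
  have hPhatS : ∀ θ x y, Phat θ x y = Real.exp (S x y θ) / Z x θ := fun θ x y =>
    hPhat θ x y
  -- rewrite `L` as an explicit function `F`
  set F : ((((v : Vg) → Fin (dg v) → ℝ) × ((v : Vo) → Fin (do_ v) → ℝ))) → ℝ :=
    fun θ => ∑ x, ∑ y, ptest x * pcond x y * (S x y θ - Real.log (Z x θ)) with hF
  have hLF : L = F := by
    funext θ
    rw [hL, hF]
    refine Finset.sum_congr rfl fun x _ => Finset.sum_congr rfl fun y _ => ?_
    rw [hPhatS, Real.log_div (Real.exp_ne_zero _) (hZpos x θ).ne', Real.log_exp]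
  -- derivative of `F`
  set D : ((((v : Vg) → Fin (dg v) → ℝ) × ((v : Vo) → Fin (do_ v) → ℝ))) →
      ((((v : Vg) → Fin (dg v) → ℝ) × ((v : Vo) → Fin (do_ v) → ℝ)) →L[ℝ] ℝ) :=
    fun θ => ∑ x, ∑ y, (ptest x * pcond x y) •
      (S x y - (Z x θ)⁻¹ • ∑ y', Real.exp (S x y' θ) • S x y') with hD
  have hFD : ∀ θ, HasFDerivAt F (D θ) θ := by
    intro θ
    refine HasFDerivAt.fun_sum fun x _ => HasFDerivAt.fun_sum fun y _ => ?_
    exact ((S x y).hasFDerivAt.sub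
      ((HasFDerivAt.fun_sum fun y' _ => (S x y').hasFDerivAt.exp).log
        (hZpos x θ).ne')).const_mul _
  rw [hLF]
  refine ⟨fun θ => (hFD θ).differentiableAt, ?_, ?_⟩
  · -- generalized views
    intro θ v i
    rw [(hFD θ).fderiv]
    have hSe : ∀ x y, S x y (Pi.single v (Pi.single i (1 : ℝ)), 0) =
        ρv v x * φg v (πg v x) y i := by
      intro x y
      rw [hSapp]
      simp only [Pi.zero_apply, zero_mul, Finset.sum_const_zero, mul_zero,
        add_zero]
      rw [Finset.sum_eq_single v]
      · rw [Pi.single_eq_same, Finset.sum_eq_single i]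
        · rw [Pi.single_eq_same, one_mul]
        · intro j _ hj; rw [Pi.single_eq_of_ne hj, zero_mul]
        · intro h; exact absurd (Finset.mem_univ i) h
      · intro v'' _ hv; rw [Pi.single_eq_of_ne hv]
        simp
      · intro h; exact absurd (Finset.mem_univ v) h
    rw [hD]
    simp only [ContinuousLinearMap.coe_sum', Finset.sum_apply,
      ContinuousLinearMap.coe_smul', Pi.smul_apply, ContinuousLinearMap.sum_apply,
      ContinuousLinearMap.smul_apply, ContinuousLinearMap.sub_apply,
      ContinuousLinearMap.coe_sub', Pi.sub_apply, smul_eq_mul, hSe]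
    rw [← Finset.sum_sub_distrib]
    refine Finset.sum_congr rfl fun x _ => ?_
    have hkey : ptest x * ρv v x = ptrain x * r v x := by
      rw [hr, hρ]
      field_simp
      rw [mul_div_assoc, div_self (htrain_pos x).ne',
        mul_one]
    have hT : (Z x θ)⁻¹ * ∑ y', Real.exp (S x y' θ) * (ρv v x * φg v (πg v x) y' i)
        = ρv v x * ∑ y', Phat θ x y' * φg v (πg v x) y' i := by
      rw [Finset.mul_sum, Finset.mul_sum]
      refine Finset.sum_congr rfl fun y' _ => ?_
      rw [hPhatS]
      ring
    calc ∑ y, ptest x * pcond x y *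
          (ρv v x * φg v (πg v x) y i -
            (Z x θ)⁻¹ * ∑ y', Real.exp (S x y' θ) * (ρv v x * φg v (πg v x) y' i))
        = ∑ y, (ptest x * pcond x y * (ρv v x * φg v (πg v x) y i) -
            pcond x y * (ptest x * ρv v x *
              ∑ y', Phat θ x y' * φg v (πg v x) y' i)) := by
          refine Finset.sum_congr rfl fun y _ => ?_
          rw [hT]; ring
      _ = (∑ y, ptest x * pcond x y * (ρv v x * φg v (πg v x) y i)) -
            (∑ y, pcond x y) * (ptest x * ρv v x *
              ∑ y', Phat θ x y' * φg v (πg v x) y' i) := by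
          rw [Finset.sum_sub_distrib, ← Finset.sum_mul]
      _ = (∑ y, ptrain x * pcond x y * r v x * φg v (πg v x) y i) -
            ptrain x * r v x * ∑ y, Phat θ x y * φg v (πg v x) y i := by
          rw [hcond_sum, one_mul]
          congr 1
          · refine Finset.sum_congr rfl fun y _ => ?_
            linear_combination pcond x y * φg v (πg v x) y i * hkey
          · linear_combination (∑ y, Phat θ x y * φg v (πg v x) y i) * hkey
  · -- non-generalized views
    intro θ v' i
    rw [(hFD θ).fderiv]
    have hSe : ∀ x y, S x y (0, Pi.single v' (Pi.single i (1 : ℝ))) =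
        ρ x * φo v' (πo v' x) y i := by
      intro x y
      rw [hSapp]
      simp only [Pi.zero_apply, zero_mul, Finset.sum_const_zero, mul_zero,
        Finset.sum_const_zero, zero_add]
      congr 1
      rw [Finset.sum_eq_single v']
      · rw [Pi.single_eq_same, Finset.sum_eq_single i]
        · rw [Pi.single_eq_same, one_mul]
        · intro j _ hj; rw [Pi.single_eq_of_ne hj, zero_mul]
        · intro h; exact absurd (Finset.mem_univ i) h
      · intro v'' _ hv; rw [Pi.single_eq_of_ne hv]
        simp
      · intro h; exact absurd (Finset.mem_univ v') h
    rw [hD]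
    simp only [ContinuousLinearMap.coe_sum', Finset.sum_apply,
      ContinuousLinearMap.coe_smul', Pi.smul_apply, ContinuousLinearMap.sum_apply,
      ContinuousLinearMap.smul_apply, ContinuousLinearMap.sub_apply,
      ContinuousLinearMap.coe_sub', Pi.sub_apply, smul_eq_mul, hSe]
    rw [← Finset.sum_sub_distrib]
    refine Finset.sum_congr rfl fun x _ => ?_
    have hkey : ptest x * ρ x = ptrain x := by
      rw [hρ]
      field_simp
      rw [mul_comm, mul_div_assoc, div_self (htest_pos x).ne', mul_one]
    have hT : (Z x θ)⁻¹ * ∑ y', Real.exp (S x y' θ) * (ρ x * φo v' (πo v' x) y' i)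
        = ρ x * ∑ y', Phat θ x y' * φo v' (πo v' x) y' i := by
      rw [Finset.mul_sum, Finset.mul_sum]
      refine Finset.sum_congr rfl fun y' _ => ?_
      rw [hPhatS]
      ring
    calc ∑ y, ptest x * pcond x y *
          (ρ x * φo v' (πo v' x) y i -
            (Z x θ)⁻¹ * ∑ y', Real.exp (S x y' θ) * (ρ x * φo v' (πo v' x) y' i))
        = ∑ y, (ptest x * pcond x y * (ρ x * φo v' (πo v' x) y i) -
            pcond x y * (ptest x * ρ x *
              ∑ y', Phat θ x y' * φo v' (πo v' x) y' i)) := by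
          refine Finset.sum_congr rfl fun y _ => ?_
          rw [hT]; ring
      _ = (∑ y, ptest x * pcond x y * (ρ x * φo v' (πo v' x) y i)) -
            (∑ y, pcond x y) * (ptest x * ρ x *
              ∑ y', Phat θ x y' * φo v' (πo v' x) y' i) := by
          rw [Finset.sum_sub_distrib, ← Finset.sum_mul]
      _ = (∑ y, ptrain x * pcond x y * φo v' (πo v' x) y i) -
            ptrain x * ∑ y, Phat θ x y * φo v' (πo v' x) y i := by
          rw [hcond_sum, one_mul]
          congr 1
          · refine Finset.sum_congr rfl fun y _ => ?_
            linear_combination pcond x y * φo v' (πo v' x) y i * hkey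
          · linear_combination (∑ y, Phat θ x y * φo v' (πo v' x) y i) * hkey
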